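/- For the cycle C_n on n ≥ 3 vertices, mc^{nh}_n(C_n) = ⌊(n−1)/2⌋. -/
import Mathlib


open SimpleGraph

/-- `w_ψ`-style: `mcA k G` is the max over labelings `ψ : V → {1,…,k}` of the
minimum of `|ψ u − ψ v|` over edges, phrased via `sSup`. -/
noncomputable def mcA {V : Type*} (k : ℕ) (G : SimpleGraph V) : ℕ :=
  sSup {m | ∃ ψ : V → ℕ, (∀ v, ψ v ∈ Finset.Icc 1 k) ∧
    ∀ u v, G.Adj u v → m ≤ Nat.dist (ψ u) (ψ v)}

/-- No-hole anti-n-labeling number: `ψ` is a bijection from `V` onto `{1,…,n}`,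
`n = |V|`. -/
noncomputable def mcNH {V : Type*} [Fintype V] (G : SimpleGraph V) : ℕ :=
  sSup {m | ∃ ψ : V → ℕ, Set.BijOn ψ Set.univ (Set.Icc 1 (Fintype.card V)) ∧
    ∀ u v, G.Adj u v → m ≤ Nat.dist (ψ u) (ψ v)}

private lemma adj_of_succ {n : ℕ} (hn : 3 ≤ n) (u v : Fin n)
    (h : u.val + 1 = v.val ∨ (u.val + 1 = n ∧ v.val = 0)) :
    (SimpleGraph.cycleGraph n).Adj u v := by
  rw [SimpleGraph.cycleGraph_adj']
  right
  rw [Fin.sub_def]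
  have hu := u.isLt
  have hv := v.isLt
  dsimp only
  rcases h with h | ⟨h1, h2⟩
  · have h3 : n - u.val + v.val = n + 1 := by omega
    rw [h3, Nat.add_mod_left]
    exact Nat.mod_eq_of_lt (by omega)
  · have h3 : n - u.val + v.val = 1 := by omega
    rw [h3]
    exact Nat.mod_eq_of_lt (by omega)

private lemma adj_vals {n : ℕ} (hn : 3 ≤ n) (u v : Fin n)
    (h : (SimpleGraph.cycleGraph n).Adj u v) :
    v.val = u.val + 1 ∨ u.val = v.val + 1 ∨ (u.val = 0 ∧ v.val + 1 = n) ∨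
      (v.val = 0 ∧ u.val + 1 = n) := by
  rw [SimpleGraph.cycleGraph_adj'] at h
  have hu := u.isLt
  have hv := v.isLt
  rcases h with h | h <;> rw [Fin.sub_def] at h <;> dsimp only at h
  · -- (n - v + u) % n = 1
    rcases Nat.lt_or_ge (n - v.val + u.val) n with hlt | hge
    · rw [Nat.mod_eq_of_lt hlt] at h; omega
    · have h2 : n - v.val + u.val - n < n := by omega
      rw [Nat.mod_eq_sub_mod hge, Nat.mod_eq_of_lt h2] at h
      omega
  · rcases Nat.lt_or_ge (n - u.val + v.val) n with hlt | hge
    · rw [Nat.mod_eq_of_lt hlt] at h; omega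
    · have h2 : n - u.val + v.val - n < n := by omega
      rw [Nat.mod_eq_sub_mod hge, Nat.mod_eq_of_lt h2] at h
      omega

private lemma mem_S {n : ℕ} (hn : 3 ≤ n) :
    (n - 1) / 2 ∈ {m | ∃ ψ : Fin n → ℕ,
      Set.BijOn ψ Set.univ (Set.Icc 1 (Fintype.card (Fin n))) ∧
      ∀ u v, (SimpleGraph.cycleGraph n).Adj u v → m ≤ Nat.dist (ψ u) (ψ v)} := by
  classical
  refine ⟨fun i => if i.val % 2 = 0 then i.val / 2 + 1 else i.val / 2 + 1 + (n + 1) / 2, ?_, ?_⟩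
  · rw [Fintype.card_fin]
    refine ⟨?_, ?_, ?_⟩
    · -- MapsTo
      intro i _
      have hi := i.isLt
      dsimp only
      constructor <;> split <;> omega
    · -- InjOn
      intro i _ j _ hij
      have hi := i.isLt
      have hj := j.isLt
      apply Fin.ext
      dsimp only at hij
      split at hij <;> split at hij <;> omega
    · -- SurjOn
      intro y hy
      obtain ⟨hy1, hy2⟩ := hy
      by_cases h : y ≤ (n + 1) / 2
      · refine ⟨⟨2 * (y - 1), by omega⟩, Set.mem_univ _, ?_⟩
        dsimp only
        split <;> omega
      · refine ⟨⟨2 * (y - 1 - (n + 1) / 2) + 1, by omega⟩, Set.mem_univ _, ?_⟩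
        dsimp only
        split <;> omega
  · intro u v huv
    have h := adj_vals hn u v huv
    have hu := u.isLt
    have hv := v.isLt
    dsimp only
    simp only [Nat.dist]
    split <;> split <;> omega

private lemma ub_S {n : ℕ} (hn : 3 ≤ n) {m : ℕ}
    (hm : m ∈ {m | ∃ ψ : Fin n → ℕ,
      Set.BijOn ψ Set.univ (Set.Icc 1 (Fintype.card (Fin n))) ∧
      ∀ u v, (SimpleGraph.cycleGraph n).Adj u v → m ≤ Nat.dist (ψ u) (ψ v)}) :
    m ≤ (n - 1) / 2 := by
  classical
  obtain ⟨ψ, hbij, hedge⟩ := hm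
  rw [Fintype.card_fin] at hbij
  by_contra hcon
  push_neg at hcon
  -- m0 = (n-1)/2 + 1 ≤ m
  set m0 : ℕ := (n - 1) / 2 + 1 with hm0
  have hm0mem : m0 ∈ Set.Icc 1 n := ⟨by omega, by omega⟩
  obtain ⟨u, -, hu⟩ := hbij.surjOn hm0mem
  have hun := u.isLt
  -- the two neighbors of u
  set w1 : Fin n := if h : u.val + 1 < n then ⟨u.val + 1, h⟩ else ⟨0, by omega⟩ with hw1
  set w2 : Fin n := if h : 1 ≤ u.val then ⟨u.val - 1, by omega⟩ else ⟨n - 1, by omega⟩ with hw2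
  have ha1 : (SimpleGraph.cycleGraph n).Adj u w1 := by
    rw [hw1]
    split
    · exact adj_of_succ hn u _ (Or.inl rfl)
    · exact adj_of_succ hn u _ (Or.inr ⟨by omega, rfl⟩)
  have ha2 : (SimpleGraph.cycleGraph n).Adj u w2 := by
    rw [hw2]
    apply SimpleGraph.Adj.symm
    split
    · exact adj_of_succ hn _ u (Or.inl (by dsimp only; omega))
    · exact adj_of_succ hn _ u (Or.inr ⟨by dsimp only; omega, by omega⟩)
  have hne : w1 ≠ w2 := by
    rw [hw1, hw2]
    intro hh
    rw [Fin.ext_iff] at hh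
    split at hh <;> split at hh <;> dsimp only at hh <;> omega
  have h1 := hedge u w1 ha1
  have h2 := hedge u w2 ha2
  have hmt1 := hbij.mapsTo (Set.mem_univ w1)
  have hmt2 := hbij.mapsTo (Set.mem_univ w2)
  obtain ⟨hb1, hb2⟩ := hmt1
  obtain ⟨hb3, hb4⟩ := hmt2
  rw [hu] at h1 h2
  simp only [Nat.dist] at h1 h2
  have heq : ψ w1 = ψ w2 := by omega
  exact hne (hbij.injOn (Set.mem_univ w1) (Set.mem_univ w2) heq)

theorem stmt_18 (n : ℕ) (hn : 3 ≤ n) :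
    mcNH (SimpleGraph.cycleGraph n) = (n - 1) / 2 := by
  unfold mcNH
  apply le_antisymm
  · exact csSup_le ⟨_, mem_S hn⟩ (fun m hm => ub_S hn hm)
  · exact le_csSup ⟨(n - 1) / 2, fun m hm => ub_S hn hm⟩ (mem_S hn)
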